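/- arXiv:2003.10559 — 2 statements merged into one kernel-verified Lean document; each statement's English description precedes it below -/
import Mathlib

section
/- For the single-qubit depolarizing Kraus family with parameters p_x, p_y, p_z ≥ 0 satisfying p_x + p_y > 0 and p = p_x + p_y + p_z < 1, and any ω ∈ ℝ, the infimum over 4×4 Hermitian matrices h of 4‖α(h)‖ equals 1 − 4( p_x p_y/(p_x + p_y) + (1−p) p_z/(1 − p + p_z) ). -/
open Matrix

noncomputable def opNorm {m n : Type*} [Fintype m] [Fintype n] [DecidableEq n]
    (A : Matrix m n ℂ) : ℝ :=
  ‖LinearMap.toContinuousLinearMap (Matrix.toEuclideanLin A)‖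

noncomputable def krausAlpha {d d' r : ℕ} (K Kd : Fin r → Matrix (Fin d') (Fin d) ℂ)
    (h : Matrix (Fin r) (Fin r) ℂ) : Matrix (Fin d) (Fin d) ℂ :=
  ∑ i, (Kd i - Complex.I • ∑ j, h i j • K j)ᴴ * (Kd i - Complex.I • ∑ j, h i j • K j)

noncomputable def krausBeta {d d' r : ℕ} (K Kd : Fin r → Matrix (Fin d') (Fin d) ℂ)
    (h : Matrix (Fin r) (Fin r) ℂ) : Matrix (Fin d) (Fin d) ℂ :=
  (Complex.I • ∑ i, (K i)ᴴ * Kd i) + ∑ i, ∑ j, h i j • ((K i)ᴴ * K j)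

def pauliX : Matrix (Fin 2) (Fin 2) ℂ := !![0, 1; 1, 0]
noncomputable def pauliY : Matrix (Fin 2) (Fin 2) ℂ := !![0, -Complex.I; Complex.I, 0]
def pauliZ : Matrix (Fin 2) (Fin 2) ℂ := !![1, 0; 0, -1]

noncomputable def Rz (ω : ℝ) : Matrix (Fin 2) (Fin 2) ℂ :=
  !![Complex.exp (-(Complex.I * ω / 2)), 0; 0, Complex.exp (Complex.I * ω / 2)]

noncomputable def depolK (px py pz ω : ℝ) : Fin 4 → Matrix (Fin 2) (Fin 2) ℂ :=
  ![(Real.sqrt (1 - (px + py + pz)) : ℂ) • Rz ω,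
    (Real.sqrt px : ℂ) • (pauliX * Rz ω),
    (Real.sqrt py : ℂ) • (pauliY * Rz ω),
    (Real.sqrt pz : ℂ) • (pauliZ * Rz ω)]

noncomputable def depolKdot (px py pz ω : ℝ) : Fin 4 → Matrix (Fin 2) (Fin 2) ℂ :=
  ![(-(Complex.I / 2) * (Real.sqrt (1 - (px + py + pz)) : ℂ)) • (pauliZ * Rz ω),
    (-(1 / 2 : ℂ) * (Real.sqrt px : ℂ)) • (pauliY * Rz ω),
    ((1 / 2 : ℂ) * (Real.sqrt py : ℂ)) • (pauliX * Rz ω),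
    (-(Complex.I / 2) * (Real.sqrt pz : ℂ)) • Rz ω]

/- ---------- auxiliary lemmas ---------- -/

lemma toEuclideanLin_one' {n : Type*} [Fintype n] [DecidableEq n] :
    Matrix.toEuclideanLin (1 : Matrix n n ℂ) = LinearMap.id := by
  ext v
  simp [Matrix.toEuclideanLin_apply]

lemma opNorm_smul_one (r : ℝ) :
    opNorm ((r : ℂ) • (1 : Matrix (Fin 2) (Fin 2) ℂ)) = |r| := by
  unfold opNorm
  rw [_root_.map_smul, toEuclideanLin_one']
  have h1 : (LinearMap.toContinuousLinearMap ((r:ℂ) • (LinearMap.id : EuclideanSpace ℂ (Fin 2) →ₗ[ℂ] EuclideanSpace ℂ (Fin 2)))) = (r:ℂ) • (ContinuousLinearMap.id ℂ (EuclideanSpace ℂ (Fin 2))) := by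
    ext v; simp
  rw [h1]
  have h2 := norm_smul (α := ℂ) (β := EuclideanSpace ℂ (Fin 2) →L[ℂ] EuclideanSpace ℂ (Fin 2)) (r:ℂ) (ContinuousLinearMap.id ℂ (EuclideanSpace ℂ (Fin 2)))
  rw [h2, ContinuousLinearMap.norm_id]
  simp

lemma euclidean_apply_le_norm {n : Type*} [Fintype n] [DecidableEq n]
    (x : EuclideanSpace ℂ n) (j : n) : ‖x j‖ ≤ ‖x‖ := by
  have h := norm_inner_le_norm (𝕜 := ℂ) (EuclideanSpace.single j (1:ℂ)) x
  rw [EuclideanSpace.inner_single_left] at h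
  simpa [EuclideanSpace.norm_single] using h

lemma re_diag_le_opNorm {n : Type*} [Fintype n] [DecidableEq n]
    (A : Matrix n n ℂ) (j : n) : (A j j).re ≤ opNorm A := by
  set T := LinearMap.toContinuousLinearMap (Matrix.toEuclideanLin A)
  have h1 : ‖T (EuclideanSpace.single j 1)‖ ≤ opNorm A := by
    have h := T.le_opNorm (EuclideanSpace.single j 1)
    rwa [EuclideanSpace.norm_single, norm_one, mul_one] at h
  have happ : T (EuclideanSpace.single j 1) = (WithLp.equiv 2 _).symm (A *ᵥ (WithLp.equiv 2 _) (EuclideanSpace.single j 1)) := by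
    simp [T, Matrix.toEuclideanLin_apply]
  have h2 : ‖A j j‖ ≤ ‖T (EuclideanSpace.single j 1)‖ := by
    have hle := euclidean_apply_le_norm (T (EuclideanSpace.single j 1)) j
    refine le_trans (le_of_eq ?_) hle
    rw [happ]
    congr 1
    show A j j = (A *ᵥ Pi.single j 1) j
    simp
  calc (A j j).re ≤ ‖A j j‖ := Complex.re_le_norm _
    _ ≤ _ := le_trans h2 h1

lemma quadmin (x y u : ℝ) (h : 0 < x^2+y^2) :
    (x^2+y^2)/4 - x^2*y^2/(x^2+y^2) ≤ (x/2+u*y)^2 + (y/2+u*x)^2 := by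
  have h1 : x^2*y^2/(x^2+y^2)*(x^2+y^2) = x^2*y^2 := div_mul_cancel₀ _ h.ne'
  nlinarith [sq_nonneg (u*(x^2+y^2)+x*y), h, sq_nonneg (x*y), sq_nonneg (x+y), sq_nonneg (x-y)]

noncomputable def hstar (u v : ℝ) : Matrix (Fin 4) (Fin 4) ℂ :=
  !![0, 0, 0, (u : ℝ);
     0, 0, Complex.I * (v : ℝ), 0;
     0, -Complex.I * (v : ℝ), 0, 0;
     (u : ℝ), 0, 0, 0]

lemma hstar_isHermitian (u v : ℝ) : (hstar u v).IsHermitian := by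
  show (hstar u v)ᴴ = hstar u v
  ext i j
  fin_cases i <;> fin_cases j <;>
    simp [hstar, Matrix.conjTranspose_apply, Complex.conj_ofReal, _root_.map_mul,
      Complex.conj_I, Matrix.vecHead, Matrix.vecTail] <;> ring_nf

set_option maxHeartbeats 1000000 in
lemma alpha_hstar (a b c d ω u v : ℝ) (ha : 0 ≤ a) (hb : 0 ≤ b) (hc : 0 ≤ c) (hd : 0 ≤ d)
    (hq : a^2 + b^2 + c^2 + d^2 = 1) :
    krausAlpha (depolK (b^2) (c^2) (d^2) ω) (depolKdot (b^2) (c^2) (d^2) ω) (hstar u v)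
      = (((a/2+u*d)^2 + (d/2+u*a)^2 + (b/2-v*c)^2 + (c/2-v*b)^2 : ℝ) : ℂ) • 1 := by
  have hsa : Real.sqrt (1 - (b^2 + c^2 + d^2)) = a := by
    rw [show (1 - (b^2+c^2+d^2)) = a^2 by linarith, Real.sqrt_sq ha]
  have hsb : Real.sqrt (b^2) = b := Real.sqrt_sq hb
  have hsc : Real.sqrt (c^2) = c := Real.sqrt_sq hc
  have hsd : Real.sqrt (d^2) = d := Real.sqrt_sq hd
  have he : Complex.exp (Complex.I * ω / 2) * Complex.exp (-(Complex.I * ω / 2)) = 1 := by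
    rw [← Complex.exp_add]; ring_nf; exact Complex.exp_zero
  have hc1 : (starRingEnd ℂ) (Complex.exp (-(Complex.I * ω / 2))) = Complex.exp (Complex.I * ω / 2) := by
    rw [← Complex.exp_conj]; congr 1
    simp [map_div₀, Complex.conj_ofReal, Complex.conj_I, map_ofNat]; ring
  have hc2 : (starRingEnd ℂ) (Complex.exp (Complex.I * ω / 2)) = Complex.exp (-(Complex.I * ω / 2)) := by
    rw [← Complex.exp_conj]; congr 1
    simp [map_div₀, Complex.conj_ofReal, Complex.conj_I, map_ofNat]; ring
  have hI4 : Complex.I^4 = 1 := by norm_num [show (4:ℕ)=2+2 from rfl, pow_add, Complex.I_sq]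
  have hI6 : Complex.I^6 = -1 := by rw [show (6:ℕ)=2*3 from rfl, pow_mul, Complex.I_sq]; norm_num
  ext i j
  fin_cases i <;> fin_cases j <;>
    simp [krausAlpha, depolK, depolKdot, hstar, pauliX, pauliY, pauliZ, Rz,
      Fin.sum_univ_four, Fin.sum_univ_two, Matrix.mul_apply, Matrix.sum_apply,
      Matrix.smul_apply, Matrix.sub_apply, Matrix.conjTranspose_apply, Matrix.one_apply,
      hsa, hsb, hsc, hsd, hc1, hc2, _root_.map_mul, map_add, map_sub, Complex.conj_ofReal,
      Matrix.vecHead, Matrix.vecTail, map_ofNat] <;>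
    push_cast <;>
    rw [show Complex.exp (Complex.I * ω / 2) = (Complex.exp (-(Complex.I * ω / 2)))⁻¹ by
      rw [← Complex.exp_neg]; ring_nf] <;>
    field_simp [Complex.exp_ne_zero] <;>
    ring_nf <;>
    simp only [Complex.I_sq, hI4, hI6, one_mul, neg_mul, mul_neg, neg_neg, mul_one] <;>
    ring_nf
set_option maxHeartbeats 4000000 in
lemma depol_lower_bound (a b c d ω : ℝ) (ha : 0 ≤ a) (hb : 0 ≤ b) (hc : 0 ≤ c) (hd : 0 ≤ d)
    (hq : a^2 + b^2 + c^2 + d^2 = 1) (had : 0 < a^2+d^2) (hbc : 0 < b^2+c^2)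
    (h : Matrix (Fin 4) (Fin 4) ℂ) (hh : h.IsHermitian) :
    (a^2+d^2)/4 - a^2*d^2/(a^2+d^2) + (b^2+c^2)/4 - b^2*c^2/(b^2+c^2)
      ≤ opNorm (krausAlpha (depolK (b^2) (c^2) (d^2) ω) (depolKdot (b^2) (c^2) (d^2) ω) h) := by
  have hsa : Real.sqrt (1 - (b^2 + c^2 + d^2)) = a := by
    rw [show (1 - (b^2+c^2+d^2)) = a^2 by linarith, Real.sqrt_sq ha]
  have hsb : Real.sqrt (b^2) = b := Real.sqrt_sq hb
  have hsc : Real.sqrt (c^2) = c := Real.sqrt_sq hc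
  have hsd : Real.sqrt (d^2) = d := Real.sqrt_sq hd
  have hnE1 : Complex.normSq (Complex.exp (-(Complex.I * ω / 2))) = 1 := by
    rw [show -(Complex.I * (ω:ℂ) / 2) = ((-ω/2 : ℝ) : ℂ) * Complex.I by push_cast; ring,
      Complex.normSq_eq_norm_sq, Complex.norm_exp_ofReal_mul_I, one_pow]
  have hnE2 : Complex.normSq (Complex.exp (Complex.I * ω / 2)) = 1 := by
    rw [show (Complex.I * (ω:ℂ) / 2) = ((ω/2 : ℝ) : ℂ) * Complex.I by push_cast; ring,
      Complex.normSq_eq_norm_sq, Complex.norm_exp_ofReal_mul_I, one_pow]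
  set K := depolK (b^2) (c^2) (d^2) ω with hKdef
  set Kd := depolKdot (b^2) (c^2) (d^2) ω with hKddef
  set C : Fin 4 → Matrix (Fin 2) (Fin 2) ℂ := fun i => Kd i - Complex.I • ∑ m, h i m • K m with hCdef
  set α := krausAlpha K Kd h with hα
  have hdiag : ∀ j, (α j j).re = ∑ i, ∑ k, Complex.normSq (C i k j) := by
    intro j
    have : α j j = ((∑ i, ∑ k, Complex.normSq (C i k j) : ℝ) : ℂ) := by
      push_cast
      simp [hα, krausAlpha, Matrix.sum_apply, Matrix.mul_apply, Matrix.conjTranspose_apply,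
        Complex.normSq_eq_conj_mul_self, hCdef]
    rw [this, Complex.ofReal_re]
  -- hermitian component facts
  have e00 : (h 0 0).im = 0 := Complex.conj_eq_iff_im.mp (hh.apply 0 0)
  have e11 : (h 1 1).im = 0 := Complex.conj_eq_iff_im.mp (hh.apply 1 1)
  have e22 : (h 2 2).im = 0 := Complex.conj_eq_iff_im.mp (hh.apply 2 2)
  have e33 : (h 3 3).im = 0 := Complex.conj_eq_iff_im.mp (hh.apply 3 3)
  have h30 : h 3 0 = (starRingEnd ℂ) (h 0 3) := (hh.apply 3 0).symm
  have h21 : h 2 1 = (starRingEnd ℂ) (h 1 2) := (hh.apply 2 1).symm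
  have r30re : (h 3 0).re = (h 0 3).re := by rw [h30]; simp
  have r30im : (h 3 0).im = -(h 0 3).im := by rw [h30]; simp
  have r21re : (h 2 1).re = (h 1 2).re := by rw [h21]; simp
  have r21im : (h 2 1).im = -(h 1 2).im := by rw [h21]; simp
  -- entry computations
  have c000 : C 0 0 0 = -Complex.I * (((a/2 : ℝ) : ℂ) + h 0 0 * a + h 0 3 * d) * Complex.exp (-(Complex.I * ω / 2)) := by
    simp [hCdef, hKdef, hKddef, depolK, depolKdot, pauliX, pauliY, pauliZ, Rz,
      Fin.sum_univ_four, Matrix.sub_apply, Matrix.smul_apply, Matrix.sum_apply,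
      Matrix.mul_apply, Fin.sum_univ_two, hsa, hsb, hsc, hsd, Matrix.vecHead, Matrix.vecTail]
    push_cast
    first
      | ring1
      | (ring_nf; simp only [Complex.I_sq]; ring_nf)
  have c011 : C 0 1 1 = -Complex.I * (-((a/2 : ℝ) : ℂ) + h 0 0 * a - h 0 3 * d) * Complex.exp (Complex.I * ω / 2) := by
    simp [hCdef, hKdef, hKddef, depolK, depolKdot, pauliX, pauliY, pauliZ, Rz,
      Fin.sum_univ_four, Matrix.sub_apply, Matrix.smul_apply, Matrix.sum_apply,
      Matrix.mul_apply, Fin.sum_univ_two, hsa, hsb, hsc, hsd, Matrix.vecHead, Matrix.vecTail]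
    push_cast
    first
      | ring1
      | (ring_nf; simp only [Complex.I_sq]; ring_nf)
  have c300 : C 3 0 0 = -Complex.I * (((d/2 : ℝ) : ℂ) + h 3 0 * a + h 3 3 * d) * Complex.exp (-(Complex.I * ω / 2)) := by
    simp [hCdef, hKdef, hKddef, depolK, depolKdot, pauliX, pauliY, pauliZ, Rz,
      Fin.sum_univ_four, Matrix.sub_apply, Matrix.smul_apply, Matrix.sum_apply,
      Matrix.mul_apply, Fin.sum_univ_two, hsa, hsb, hsc, hsd, Matrix.vecHead, Matrix.vecTail]
    push_cast
    first
      | ring1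
      | (ring_nf; simp only [Complex.I_sq]; ring_nf)
  have c311 : C 3 1 1 = -Complex.I * (((d/2 : ℝ) : ℂ) + h 3 0 * a - h 3 3 * d) * Complex.exp (Complex.I * ω / 2) := by
    simp [hCdef, hKdef, hKddef, depolK, depolKdot, pauliX, pauliY, pauliZ, Rz,
      Fin.sum_univ_four, Matrix.sub_apply, Matrix.smul_apply, Matrix.sum_apply,
      Matrix.mul_apply, Fin.sum_univ_two, hsa, hsb, hsc, hsd, Matrix.vecHead, Matrix.vecTail]
    push_cast
    first
      | ring1
      | (ring_nf; simp only [Complex.I_sq]; ring_nf)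
  have c101 : C 1 0 1 = (Complex.I * (((b/2 : ℝ) : ℂ) - h 1 1 * b) - h 1 2 * c) * Complex.exp (Complex.I * ω / 2) := by
    simp [hCdef, hKdef, hKddef, depolK, depolKdot, pauliX, pauliY, pauliZ, Rz,
      Fin.sum_univ_four, Matrix.sub_apply, Matrix.smul_apply, Matrix.sum_apply,
      Matrix.mul_apply, Fin.sum_univ_two, hsa, hsb, hsc, hsd, Matrix.vecHead, Matrix.vecTail]
    push_cast
    first
      | ring1
      | (ring_nf; simp only [Complex.I_sq]; ring_nf)
  have c110 : C 1 1 0 = (-Complex.I * (((b/2 : ℝ) : ℂ) + h 1 1 * b) + h 1 2 * c) * Complex.exp (-(Complex.I * ω / 2)) := by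
    simp [hCdef, hKdef, hKddef, depolK, depolKdot, pauliX, pauliY, pauliZ, Rz,
      Fin.sum_univ_four, Matrix.sub_apply, Matrix.smul_apply, Matrix.sum_apply,
      Matrix.mul_apply, Fin.sum_univ_two, hsa, hsb, hsc, hsd, Matrix.vecHead, Matrix.vecTail]
    push_cast
    first
      | ring1
      | (ring_nf; simp only [Complex.I_sq]; ring_nf)
  have c201 : C 2 0 1 = (((c/2 : ℝ) : ℂ) - Complex.I * (h 2 1 * b) - h 2 2 * c) * Complex.exp (Complex.I * ω / 2) := by
    simp [hCdef, hKdef, hKddef, depolK, depolKdot, pauliX, pauliY, pauliZ, Rz,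
      Fin.sum_univ_four, Matrix.sub_apply, Matrix.smul_apply, Matrix.sum_apply,
      Matrix.mul_apply, Fin.sum_univ_two, hsa, hsb, hsc, hsd, Matrix.vecHead, Matrix.vecTail]
    push_cast
    first
      | ring1
      | (ring_nf; simp only [Complex.I_sq]; ring_nf)
  have c210 : C 2 1 0 = (((c/2 : ℝ) : ℂ) - Complex.I * (h 2 1 * b) + h 2 2 * c) * Complex.exp (-(Complex.I * ω / 2)) := by
    simp [hCdef, hKdef, hKddef, depolK, depolKdot, pauliX, pauliY, pauliZ, Rz,
      Fin.sum_univ_four, Matrix.sub_apply, Matrix.smul_apply, Matrix.sum_apply,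
      Matrix.mul_apply, Fin.sum_univ_two, hsa, hsb, hsc, hsd, Matrix.vecHead, Matrix.vecTail]
    push_cast
    first
      | ring1
      | (ring_nf; simp only [Complex.I_sq]; ring_nf)
  -- normSq computations
  have m000 : Complex.normSq (C 0 0 0)
      = (a/2 + (h 0 0).re * a + (h 0 3).re * d)^2 + ((h 0 0).im * a + (h 0 3).im * d)^2 := by
    rw [c000, Complex.normSq_mul, hnE1, mul_one, Complex.normSq_mul, Complex.normSq_neg,
      Complex.normSq_I, one_mul, Complex.normSq_apply]
    simp [Complex.add_re, Complex.add_im, Complex.mul_re, Complex.mul_im]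
    ring
  have m011 : Complex.normSq (C 0 1 1)
      = (-(a/2) + (h 0 0).re * a - (h 0 3).re * d)^2 + ((h 0 0).im * a - (h 0 3).im * d)^2 := by
    rw [c011, Complex.normSq_mul, hnE2, mul_one, Complex.normSq_mul, Complex.normSq_neg,
      Complex.normSq_I, one_mul, Complex.normSq_apply]
    simp [Complex.add_re, Complex.add_im, Complex.mul_re, Complex.mul_im]
    ring
  have m300 : Complex.normSq (C 3 0 0)
      = (d/2 + (h 3 0).re * a + (h 3 3).re * d)^2 + ((h 3 0).im * a + (h 3 3).im * d)^2 := by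
    rw [c300, Complex.normSq_mul, hnE1, mul_one, Complex.normSq_mul, Complex.normSq_neg,
      Complex.normSq_I, one_mul, Complex.normSq_apply]
    simp [Complex.add_re, Complex.add_im, Complex.mul_re, Complex.mul_im]
    ring
  have m311 : Complex.normSq (C 3 1 1)
      = (d/2 + (h 3 0).re * a - (h 3 3).re * d)^2 + ((h 3 0).im * a - (h 3 3).im * d)^2 := by
    rw [c311, Complex.normSq_mul, hnE2, mul_one, Complex.normSq_mul, Complex.normSq_neg,
      Complex.normSq_I, one_mul, Complex.normSq_apply]
    simp [Complex.add_re, Complex.add_im, Complex.mul_re, Complex.mul_im]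
    ring
  have m101 : Complex.normSq (C 1 0 1)
      = ((h 1 1).im * b - (h 1 2).re * c)^2 + (b/2 - (h 1 1).re * b - (h 1 2).im * c)^2 := by
    rw [c101, Complex.normSq_mul, hnE2, mul_one, Complex.normSq_apply]
    simp [Complex.add_re, Complex.add_im, Complex.sub_re, Complex.sub_im, Complex.mul_re, Complex.mul_im]
    ring
  have m110 : Complex.normSq (C 1 1 0)
      = ((h 1 1).im * b + (h 1 2).re * c)^2 + (b/2 + (h 1 1).re * b - (h 1 2).im * c)^2 := by
    rw [c110, Complex.normSq_mul, hnE1, mul_one, Complex.normSq_apply]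
    simp [Complex.add_re, Complex.add_im, Complex.sub_re, Complex.sub_im, Complex.mul_re, Complex.mul_im]
    ring
  have m201 : Complex.normSq (C 2 0 1)
      = (c/2 + (h 2 1).im * b - (h 2 2).re * c)^2 + ((h 2 1).re * b + (h 2 2).im * c)^2 := by
    rw [c201, Complex.normSq_mul, hnE2, mul_one, Complex.normSq_apply]
    simp [Complex.add_re, Complex.add_im, Complex.sub_re, Complex.sub_im, Complex.mul_re, Complex.mul_im]
    ring
  have m210 : Complex.normSq (C 2 1 0)
      = (c/2 + (h 2 1).im * b + (h 2 2).re * c)^2 + ((h 2 1).re * b - (h 2 2).im * c)^2 := by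
    rw [c210, Complex.normSq_mul, hnE1, mul_one, Complex.normSq_apply]
    simp [Complex.add_re, Complex.add_im, Complex.sub_re, Complex.sub_im, Complex.mul_re, Complex.mul_im]
    ring
  -- assemble
  have hb0 := re_diag_le_opNorm α 0
  have hb1 := re_diag_le_opNorm α 1
  have hq1 := quadmin a d ((h 0 3).re) had
  have hq2 := quadmin b c (-((h 1 2).im)) hbc
  have hsum0 := hdiag 0
  have hsum1 := hdiag 1
  rw [Fin.sum_univ_four] at hsum0 hsum1
  simp only [Fin.sum_univ_two] at hsum0 hsum1
  rw [m000, m110, m210, m300] at hsum0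
  rw [m011, m101, m201, m311] at hsum1
  rw [e00, e11, e22, e33, r30re, r30im, r21re, r21im] at hsum0 hsum1
  have d1 := Complex.normSq_nonneg (C 0 0 1)
  have d2 := Complex.normSq_nonneg (C 0 1 0)
  have d3 := Complex.normSq_nonneg (C 1 0 0)
  have d4 := Complex.normSq_nonneg (C 1 1 1)
  have d5 := Complex.normSq_nonneg (C 2 0 0)
  have d6 := Complex.normSq_nonneg (C 2 1 1)
  have d7 := Complex.normSq_nonneg (C 3 0 1)
  have d8 := Complex.normSq_nonneg (C 3 1 0)
  linarith [hb0, hb1, hq1, hq2, hsum0, hsum1, d1, d2, d3, d4, d5, d6, d7, d8,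
    sq_nonneg ((h 0 0).re * a), sq_nonneg ((h 3 3).re * d), sq_nonneg ((h 0 3).im * d),
    sq_nonneg ((h 0 3).im * a), sq_nonneg ((h 1 1).re * b), sq_nonneg ((h 2 2).re * c),
    sq_nonneg ((h 1 2).re * c), sq_nonneg ((h 1 2).re * b)]

set_option maxHeartbeats 1000000 in
/-- Single-channel quantum Fisher information of the depolarizing channel:
`inf_h 4‖α(h)‖ = 1 − 4(p_x p_y/(p_x+p_y) + (1−p)p_z/(1−p+p_z))` where `p = p_x+p_y+p_z`. -/
theorem depolarizing_single_channel_QFI (px py pz ω : ℝ)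
    (hx : 0 ≤ px) (hy : 0 ≤ py) (hz : 0 ≤ pz)
    (hxy : 0 < px + py) (hp : px + py + pz < 1) :
    sInf {x : ℝ | ∃ h : Matrix (Fin 4) (Fin 4) ℂ, h.IsHermitian ∧
        x = 4 * opNorm (krausAlpha (depolK px py pz ω) (depolKdot px py pz ω) h)}
      = 1 - 4 * (px * py / (px + py) +
          (1 - (px + py + pz)) * pz / (1 - (px + py + pz) + pz)) := by
  have hq0 : (0:ℝ) < 1 - (px + py + pz) := by linarith
  set a := Real.sqrt (1 - (px + py + pz)) with hadef
  set b := Real.sqrt px with hbdef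
  set c := Real.sqrt py with hcdef
  set d := Real.sqrt pz with hddef
  have ha : 0 ≤ a := Real.sqrt_nonneg _
  have hb : 0 ≤ b := Real.sqrt_nonneg _
  have hc : 0 ≤ c := Real.sqrt_nonneg _
  have hd : 0 ≤ d := Real.sqrt_nonneg _
  have ha2 : a^2 = 1 - (px + py + pz) := Real.sq_sqrt (le_of_lt hq0)
  have hb2 : b^2 = px := Real.sq_sqrt hx
  have hc2 : c^2 = py := Real.sq_sqrt hy
  have hd2 : d^2 = pz := Real.sq_sqrt hz
  have hq : a^2 + b^2 + c^2 + d^2 = 1 := by rw [ha2, hb2, hc2, hd2]; ring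
  have had : 0 < a^2 + d^2 := by rw [ha2, hd2]; linarith
  have hbc : 0 < b^2 + c^2 := by rw [hb2, hc2]; linarith
  rw [← hb2, ← hc2, ← hd2]
  set u : ℝ := -(a*d/(a^2+d^2)) with hudef
  set v : ℝ := b*c/(b^2+c^2) with hvdef
  set V : ℝ := (a/2+u*d)^2 + (d/2+u*a)^2 + (b/2-v*c)^2 + (c/2-v*b)^2 with hVdef
  set c0 : ℝ := (a^2+d^2)/4 - a^2*d^2/(a^2+d^2) + (b^2+c^2)/4 - b^2*c^2/(b^2+c^2) with hc0def
  have hVc0 : V = c0 := by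
    rw [hVdef, hc0def, hudef, hvdef]
    field_simp [had.ne', hbc.ne']
    ring
  have hVnn : 0 ≤ V := by positivity
  have hkey : 4 * opNorm (krausAlpha (depolK (b^2) (c^2) (d^2) ω) (depolKdot (b^2) (c^2) (d^2) ω) (hstar u v)) = 4 * c0 := by
    rw [alpha_hstar a b c d ω u v ha hb hc hd hq, opNorm_smul_one, abs_of_nonneg hVnn, hVc0]
  have hmem : (4 * c0) ∈ {x : ℝ | ∃ h : Matrix (Fin 4) (Fin 4) ℂ, h.IsHermitian ∧
      x = 4 * opNorm (krausAlpha (depolK (b^2) (c^2) (d^2) ω) (depolKdot (b^2) (c^2) (d^2) ω) h)} :=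
    ⟨hstar u v, hstar_isHermitian u v, hkey.symm⟩
  have hlbd : ∀ x ∈ {x : ℝ | ∃ h : Matrix (Fin 4) (Fin 4) ℂ, h.IsHermitian ∧
      x = 4 * opNorm (krausAlpha (depolK (b^2) (c^2) (d^2) ω) (depolKdot (b^2) (c^2) (d^2) ω) h)},
      4 * c0 ≤ x := by
    rintro x ⟨h, hh, rfl⟩
    have := depol_lower_bound a b c d ω ha hb hc hd hq had hbc h hh
    rw [hc0def]
    linarith
  have hrhs : 1 - 4 * (b^2 * c^2 / (b^2 + c^2) +
      (1 - (b^2 + c^2 + d^2)) * d^2 / (1 - (b^2 + c^2 + d^2) + d^2)) = 4 * c0 := by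
    have h1 : 1 - (b^2 + c^2 + d^2) = a^2 := by linarith
    rw [h1, hc0def]
    linear_combination -hq
  rw [hrhs]
  exact le_antisymm (csInf_le ⟨4 * c0, hlbd⟩ hmem) (le_csInf ⟨4 * c0, hmem⟩ hlbd)
end

section
/- For the single-qubit channel with Kraus family K₁ = √(1−p_y)·R, K₂ = √p_y·σ_y R (where 0 ≤ p_y < 1, R = diag(e^{−iω/2}, e^{iω/2})) and derivative family given by the entrywise ω-derivatives K̇₁ = −(i/2)√(1−p_y)·σ_z R, K̇₂ = (1/2)√p_y·σ_x R, the infimum over 2×2 Hermitian matrices h of 4‖β(h)‖² equals 1, and it is attained. -/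
set_option maxHeartbeats 1000000

open Matrix

/-- Kraus family of a Pauli-Z rotation composed with pure σ_y noise. -/
noncomputable def yNoiseK (py ω : ℝ) : Fin 2 → Matrix (Fin 2) (Fin 2) ℂ :=
  ![(Real.sqrt (1 - py) : ℂ) • Rz ω, (Real.sqrt py : ℂ) • (pauliY * Rz ω)]

/-- Derivative family (entrywise ω-derivatives). -/
noncomputable def yNoiseKdot (py ω : ℝ) : Fin 2 → Matrix (Fin 2) (Fin 2) ℂ :=
  ![(-(Complex.I / 2) * (Real.sqrt (1 - py) : ℂ)) • (pauliZ * Rz ω),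
    ((1 / 2 : ℂ) * (Real.sqrt py : ℂ)) • (pauliX * Rz ω)]

theorem exp_mul_exp' (a b : ℂ) (h : a + b = 0) : Complex.exp a * Complex.exp b = 1 := by
  rw [← Complex.exp_add, h, Complex.exp_zero]

lemma Rz_P1 (ω : ℝ) : (Rz ω)ᴴ * Rz ω = 1 := by
  ext i j
  fin_cases i <;> fin_cases j <;>
    simp [Rz, Matrix.mul_apply, Fin.sum_univ_two, Matrix.one_apply,
      ← Complex.exp_conj, map_div₀, Complex.conj_I, Complex.conj_ofNat] <;>
    exact exp_mul_exp' _ _ (by ring)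

lemma Rz_P2 (ω : ℝ) : (Rz ω)ᴴ * (pauliZ * Rz ω) = pauliZ := by
  ext i j
  fin_cases i <;> fin_cases j <;>
    simp [Rz, pauliZ, Matrix.mul_apply, Fin.sum_univ_two,
      ← Complex.exp_conj, map_div₀, Complex.conj_I, Complex.conj_ofNat] <;>
    exact exp_mul_exp' _ _ (by ring)

lemma Rz_P3 (ω : ℝ) : (pauliY * Rz ω)ᴴ * (pauliX * Rz ω) = -Complex.I • pauliZ := by
  ext i j
  fin_cases i <;> fin_cases j <;>
    simp [Rz, pauliX, pauliY, pauliZ, Matrix.mul_apply, Fin.sum_univ_two,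
      ← Complex.exp_conj, map_div₀, Complex.conj_I, Complex.conj_ofNat, mul_assoc] <;>
    rw [exp_mul_exp' _ _ (by ring)]

lemma Rz_P4 (ω : ℝ) : (pauliY * Rz ω)ᴴ * (pauliY * Rz ω) = 1 := by
  ext i j
  fin_cases i <;> fin_cases j <;>
    simp [Rz, pauliY, Matrix.mul_apply, Fin.sum_univ_two, Matrix.one_apply,
      ← Complex.exp_conj, map_div₀, Complex.conj_I, Complex.conj_ofNat,
      mul_assoc, mul_left_comm] <;>
    rw [exp_mul_exp' _ _ (by ring)] <;> simp [Complex.I_mul_I]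

lemma pauliY_herm : pauliYᴴ = pauliY := by
  ext i j
  fin_cases i <;> fin_cases j <;> simp [pauliY]

lemma Rz_P5 (ω : ℝ) : (pauliY * Rz ω)ᴴ * Rz ω = (Rz ω)ᴴ * (pauliY * Rz ω) := by
  rw [conjTranspose_mul, pauliY_herm, mul_assoc]

lemma M_diag (ω : ℝ) : ((Rz ω)ᴴ * (pauliY * Rz ω)) 0 0 = 0
    ∧ ((Rz ω)ᴴ * (pauliY * Rz ω)) 1 1 = 0 := by
  constructor <;> simp [Rz, pauliY, Matrix.mul_apply, Fin.sum_univ_two]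

lemma beta_decomp (py ω : ℝ) (h0 : 0 ≤ py) (h1 : py ≤ 1) (h : Matrix (Fin 2) (Fin 2) ℂ) :
    krausBeta (yNoiseK py ω) (yNoiseKdot py ω) h
      = (1/2 : ℂ) • pauliZ
        + (h 0 0 * ((1:ℂ) - py) + h 1 1 * py) • (1 : Matrix (Fin 2) (Fin 2) ℂ)
        + ((h 0 1 + h 1 0) * ((Real.sqrt (1-py) : ℂ) * (Real.sqrt py : ℂ)))
            • ((Rz ω)ᴴ * (pauliY * Rz ω)) := by
  have e1 : (Real.sqrt (1 - py) : ℂ) * (Real.sqrt (1 - py) : ℂ) = 1 - (py:ℂ) := by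
    rw [← Complex.ofReal_mul, Real.mul_self_sqrt (by linarith)]; push_cast; ring
  have e2 : (Real.sqrt py : ℂ) * (Real.sqrt py : ℂ) = (py:ℂ) := by
    rw [← Complex.ofReal_mul, Real.mul_self_sqrt h0]
  simp only [krausBeta, yNoiseK, yNoiseKdot, Fin.sum_univ_two, Matrix.cons_val_zero,
    Matrix.cons_val_one, Matrix.head_cons, conjTranspose_smul, smul_mul_assoc,
    Matrix.mul_smul, Complex.star_def, _root_.map_mul, map_neg, map_div₀, Complex.conj_I,
    Complex.conj_ofReal, Complex.conj_ofNat, _root_.map_one, map_ofNat,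
    Rz_P1 ω, Rz_P2 ω, Rz_P3 ω, Rz_P4 ω, Rz_P5 ω]
  match_scalars
  · linear_combination (-(1/2)*Complex.I^2) * e1 + (-(1/2)*Complex.I^2) * e2
      - (1/2) * Complex.I_sq
  · linear_combination h 0 0 * e1 + h 1 1 * e2
  all_goals ring

lemma coord_le_norm {n : Type*} [Fintype n] [DecidableEq n] (x : EuclideanSpace ℂ n) (i : n) :
    ‖x i‖ ≤ ‖x‖ := by
  have h := norm_inner_le_norm (𝕜 := ℂ) (EuclideanSpace.single i (1:ℂ)) x
  rw [EuclideanSpace.inner_single_left] at h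
  simpa using h

lemma entry_le_opNorm {m n : ℕ} (A : Matrix (Fin m) (Fin n) ℂ) (i : Fin m) (j : Fin n) :
    ‖A i j‖ ≤ opNorm A := by
  set L := LinearMap.toContinuousLinearMap (Matrix.toEuclideanLin A)
  have h1 : L (EuclideanSpace.single j 1) = (WithLp.equiv 2 _).symm (A *ᵥ Pi.single j 1) := by
    rw [LinearMap.coe_toContinuousLinearMap', Matrix.toEuclideanLin_apply, PiLp.ofLp_single, WithLp.equiv_symm_apply]
  have h2 : ‖L (EuclideanSpace.single j 1)‖ ≤ ‖L‖ := by
    simpa using L.le_opNorm (EuclideanSpace.single j 1)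
  calc ‖A i j‖ = ‖(L (EuclideanSpace.single j 1)) i‖ := by
        rw [h1, WithLp.equiv_symm_apply, PiLp.toLp_apply]; simp
    _ ≤ ‖L (EuclideanSpace.single j 1)‖ := coord_le_norm _ i
    _ ≤ ‖L‖ := h2

lemma opNorm_halfZ : opNorm !![(1/2 : ℂ), 0; 0, -(1/2)] = 1/2 := by
  apply le_antisymm
  · apply ContinuousLinearMap.opNorm_le_bound _ (by norm_num : (0:ℝ) ≤ 1/2)
    intro v
    rw [LinearMap.coe_toContinuousLinearMap', Matrix.toEuclideanLin_apply]
    have hv : ∀ i, ((WithLp.equiv 2 (Fin 2 → ℂ)).symm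
        ((!![(1/2 : ℂ), 0; 0, -(1/2)]) *ᵥ (WithLp.equiv 2 (Fin 2 → ℂ)) v) :
          EuclideanSpace ℂ (Fin 2)) i
        = (!![(1/2 : ℂ), 0; 0, -(1/2)] *ᵥ fun k => v k) i := by
      intro i; rfl
    rw [EuclideanSpace.norm_eq, EuclideanSpace.norm_eq]
    have h0 : (!![(1/2 : ℂ), 0; 0, -(1/2)] *ᵥ fun k => v k) 0 = (1/2 : ℂ) * v 0 := by
      simp [Matrix.mulVec, dotProduct, Fin.sum_univ_two]
    have h1 : (!![(1/2 : ℂ), 0; 0, -(1/2)] *ᵥ fun k => v k) 1 = -(1/2 : ℂ) * v 1 := by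
      simp [Matrix.mulVec, dotProduct, Fin.sum_univ_two]
    rw [Fin.sum_univ_two, Fin.sum_univ_two, PiLp.toLp_apply, PiLp.toLp_apply, h0, h1]
    have key : ‖(1/2 : ℂ) * v 0‖ ^ 2 + ‖-(1/2 : ℂ) * v 1‖ ^ 2
        = (1/4) * (‖v 0‖ ^ 2 + ‖v 1‖ ^ 2) := by
      rw [norm_mul, norm_mul, mul_pow, mul_pow]
      norm_num
      ring
    rw [key, Real.sqrt_mul (by norm_num),
      show Real.sqrt (1/4) = 1/2 by
        rw [show (1/4 : ℝ) = (1/2)^2 by norm_num, Real.sqrt_sq (by norm_num)]]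
  · have := entry_le_opNorm !![(1/2 : ℂ), 0; 0, -(1/2)] 0 0
    simpa using this

lemma halfZ_eq : (1/2 : ℂ) • pauliZ = !![(1/2 : ℂ), 0; 0, -(1/2)] := by
  ext i j
  fin_cases i <;> fin_cases j <;> simp [pauliZ]

/-- For the Pauli-Z rotation with pure σ_y noise (`0 ≤ p_y < 1`), the Heisenberg-limit
coefficient `inf_h 4‖β(h)‖²` equals `1`, and the infimum is attained. -/
theorem yNoise_HL_coefficient (py ω : ℝ) (h0 : 0 ≤ py) (h1 : py < 1) :
    IsLeast {x : ℝ | ∃ h : Matrix (Fin 2) (Fin 2) ℂ, h.IsHermitian ∧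
        x = 4 * opNorm (krausBeta (yNoiseK py ω) (yNoiseKdot py ω) h) ^ 2} 1 := by
  constructor
  · refine ⟨0, Matrix.isHermitian_zero, ?_⟩
    have hb := beta_decomp py ω h0 h1.le 0
    simp only [Matrix.zero_apply, zero_mul, mul_zero, add_zero, zero_add, zero_smul] at hb
    rw [hb, halfZ_eq, opNorm_halfZ]
    norm_num
  · rintro x ⟨h, _, rfl⟩
    set β := krausBeta (yNoiseK py ω) (yNoiseKdot py ω) h with hβ
    have hb := beta_decomp py ω h0 h1.le h
    set c : ℂ := h 0 0 * ((1:ℂ) - py) + h 1 1 * py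
    have d0 : β 0 0 = 1/2 + c := by
      rw [hβ, hb]
      simp [Matrix.add_apply, Matrix.smul_apply, Matrix.one_apply, pauliZ, (M_diag ω).1]
    have d1 : β 1 1 = -(1/2) + c := by
      rw [hβ, hb]
      simp [Matrix.add_apply, Matrix.smul_apply, Matrix.one_apply, pauliZ, (M_diag ω).2]
    have k0 : ‖β 0 0‖ ≤ opNorm β := entry_le_opNorm β 0 0
    have k1 : ‖β 1 1‖ ≤ opNorm β := entry_le_opNorm β 1 1
    have hsub : β 0 0 - β 1 1 = 1 := by rw [d0, d1]; ring
    have hone : (1:ℝ) ≤ ‖β 0 0‖ + ‖β 1 1‖ := by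
      have := norm_sub_le (β 0 0) (β 1 1)
      rw [hsub] at this
      simpa using this
    have hop : (1:ℝ)/2 ≤ opNorm β := by linarith
    nlinarith [hop]
end
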